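/- Let g : (0, π) → ℝ be continuous, g < 0 on (0, π), and let v : [0, π] → ℝ be C¹ with v(0) = v(π) = 0, v > 0 on (0, π), and suppose v(x)v'(x) = g(x)·w(x) for a continuous function w : (0, π) → ℝ. If w > 0 on all of (0, π) then a contradiction arises; likewise if w < 0 on all of (0, π). Hence w vanishes somewhere on (0, π). -/
import Mathlib


open Set

/-- abstract inflection-point existence: if v·v' = g·w with
g < 0, v(0)=v(π)=0, v > 0 inside, then w cannot have a constant sign, and
w vanishes somewhere on (0,π). -/
theorem stmt17 (g w v v' : ℝ → ℝ)
    (hgcont : ContinuousOn g (Ioo 0 Real.pi))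
    (hgneg : ∀ x ∈ Ioo 0 Real.pi, g x < 0)
    (hvcont : ContinuousOn v (Icc 0 Real.pi))
    (hv' : ∀ x ∈ Ioo 0 Real.pi, HasDerivAt v (v' x) x)
    (h0 : v 0 = 0) (hπ : v Real.pi = 0)
    (hpos : ∀ x ∈ Ioo 0 Real.pi, 0 < v x)
    (hwcont : ContinuousOn w (Ioo 0 Real.pi))
    (hrel : ∀ x ∈ Ioo 0 Real.pi, v x * v' x = g x * w x) :
    (¬ ∀ x ∈ Ioo 0 Real.pi, 0 < w x) ∧ (¬ ∀ x ∈ Ioo 0 Real.pi, w x < 0) ∧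
      ∃ x ∈ Ioo 0 Real.pi, w x = 0 := by
  have hint : interior (Icc (0:ℝ) Real.pi) = Ioo 0 Real.pi := interior_Icc
  have hmid : Real.pi / 2 ∈ Ioo (0:ℝ) Real.pi :=
    ⟨by positivity, by linarith [Real.pi_pos]⟩
  have hnpos : ¬ ∀ x ∈ Ioo 0 Real.pi, 0 < w x := by
    intro hw
    -- v' < 0 on interior, so v strictly antitone
    have hanti : StrictAntiOn v (Icc 0 Real.pi) := by
      apply strictAntiOn_of_deriv_neg (convex_Icc _ _) hvcont
      intro x hx
      rw [hint] at hx
      have hd : deriv v x = v' x := (hv' x hx).deriv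
      rw [hd]
      have h1 := hrel x hx
      have h2 : g x * w x < 0 := mul_neg_of_neg_of_pos (hgneg x hx) (hw x hx)
      nlinarith [hpos x hx]
    have := hanti (left_mem_Icc.2 Real.pi_pos.le)
      ⟨hmid.1.le, hmid.2.le⟩ hmid.1
    rw [h0] at this
    linarith [hpos _ hmid]
  have hnneg : ¬ ∀ x ∈ Ioo 0 Real.pi, w x < 0 := by
    intro hw
    have hmono : StrictMonoOn v (Icc 0 Real.pi) := by
      apply strictMonoOn_of_deriv_pos (convex_Icc _ _) hvcont
      intro x hx
      rw [hint] at hx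
      have hd : deriv v x = v' x := (hv' x hx).deriv
      rw [hd]
      have h1 := hrel x hx
      have h2 : 0 < g x * w x := mul_pos_of_neg_of_neg (hgneg x hx) (hw x hx)
      nlinarith [hpos x hx]
    have := hmono ⟨hmid.1.le, hmid.2.le⟩
      (right_mem_Icc.2 Real.pi_pos.le) hmid.2
    rw [hπ] at this
    linarith [hpos _ hmid]
  refine ⟨hnpos, hnneg, ?_⟩
  push_neg at hnpos hnneg
  obtain ⟨a, ha, hwa⟩ := hnpos
  obtain ⟨b, hb, hwb⟩ := hnneg
  have hsub : uIcc a b ⊆ Ioo 0 Real.pi := by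
    exact (Set.ordConnected_Ioo).uIcc_subset ha hb
  have hiv : uIcc (w a) (w b) ⊆ w '' uIcc a b :=
    intermediate_value_uIcc (hwcont.mono hsub)
  have h0mem : (0:ℝ) ∈ uIcc (w a) (w b) := by
    rcases le_total (w a) (w b) with h | h
    · rw [uIcc_of_le h]; exact ⟨hwa, hwb⟩
    · rw [uIcc_of_ge h]; constructor <;> linarith
  obtain ⟨x, hx, hwx⟩ := hiv h0mem
  exact ⟨x, hsub hx, hwx⟩
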